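/- arXiv:2207.00279 — 3 statements merged into one kernel-verified Lean document; each statement's English description precedes it below -/
import Mathlib

section
/- Let ε > 0 and let U : ℝ → ℂ be a continuously differentiable function with compact support. Then ∫₀^∞ (r + ε)⁻² |U(r)|² dr ≤ (2/ε) |U(0)|² + 4 ∫₀^∞ |U'(r)|² dr. -/
open MeasureTheory Filter Set

/-- Hardy-type inequality (a1): for `ε > 0` and `U : ℝ → ℂ` continuously
differentiable with compact support,
`∫₀^∞ (r+ε)⁻² |U r|² dr ≤ (2/ε) |U 0|² + 4 ∫₀^∞ |U' r|² dr`. -/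
theorem hardy_type_inequality (ε : ℝ) (hε : 0 < ε) (U : ℝ → ℂ)
    (hU : ContDiff ℝ 1 U) (hsupp : HasCompactSupport U) :
    ∫ r in Set.Ioi (0 : ℝ), (r + ε)⁻¹ ^ 2 * ‖U r‖ ^ 2
      ≤ (2 / ε) * ‖U 0‖ ^ 2 + 4 * ∫ r in Set.Ioi (0 : ℝ), ‖deriv U r‖ ^ 2 := by
  have hUc : Continuous U := hU.continuous
  have hU'c : Continuous (deriv U) := hU.continuous_deriv le_rfl
  have hdU : ∀ x : ℝ, HasDerivAt U (deriv U x) x :=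
    fun x => (hU.differentiable one_ne_zero x).hasDerivAt
  set φ : ℝ → ℝ := fun r => ‖U r‖ ^ 2 with hφdef
  set ψ : ℝ → ℝ := fun r => 2 * (inner ℝ (U r) (deriv U r) : ℝ) with hψdef
  have hφc : Continuous φ := (contDiff_norm_sq ℝ (n := (0:ℕ∞))).continuous.comp hUc
  have hψc : Continuous ψ :=
    continuous_const.mul ((continuous_inner (𝕜 := ℝ)).comp (hUc.prodMk hU'c))
  have hφsupp : HasCompactSupport φ := by
    apply HasCompactSupport.intro hsupp
    intro x hx
    simp [hφdef, image_eq_zero_of_notMem_tsupport hx]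
  have hψsupp : HasCompactSupport ψ := by
    apply HasCompactSupport.intro hsupp
    intro x hx
    simp [hψdef, image_eq_zero_of_notMem_tsupport hx]
  have hφd : ∀ x : ℝ, HasDerivAt φ (ψ x) x := by
    intro x
    have h := (hdU x).inner ℝ (hdU x)
    have h2 : HasDerivAt (fun t => (inner ℝ (U t) (U t) : ℝ)) (ψ x) x := by
      convert h using 1
      · rfl
      · rfl
      have := real_inner_comm (U x) (deriv U x)
      simp only [hψdef]; linarith
    simpa only [real_inner_self_eq_norm_sq] using h2
  -- integrability via the "max" trick
  have hmax : ∀ r : ℝ, r ∈ Ioi (0:ℝ) → max r 0 = r := fun r hr => max_eq_left hr.le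
  have hmaxc : Continuous (fun r : ℝ => (max r 0 + ε)⁻¹) := by
    apply Continuous.inv₀ (by continuity)
    intro x; positivity
  have intI : IntegrableOn (fun r => (r + ε)⁻¹ ^ 2 * φ r) (Ioi (0:ℝ)) := by
    have h1 : Integrable (fun r : ℝ => (max r 0 + ε)⁻¹ ^ 2 * φ r) := by
      apply Continuous.integrable_of_hasCompactSupport ((hmaxc.pow 2).mul hφc)
      apply HasCompactSupport.intro hφsupp
      intro x hx; simp [image_eq_zero_of_notMem_tsupport hx]
    apply (h1.integrableOn (s := Ioi 0)).congr_fun _ measurableSet_Ioi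
    intro r hr; simp [hmax r hr]
  have intJ : IntegrableOn (fun r => (r + ε)⁻¹ * ψ r) (Ioi (0:ℝ)) := by
    have h1 : Integrable (fun r : ℝ => (max r 0 + ε)⁻¹ * ψ r) := by
      apply Continuous.integrable_of_hasCompactSupport (hmaxc.mul hψc)
      apply HasCompactSupport.intro hψsupp
      intro x hx; simp [image_eq_zero_of_notMem_tsupport hx]
    apply (h1.integrableOn (s := Ioi 0)).congr_fun _ measurableSet_Ioi
    intro r hr; simp [hmax r hr]
  have intD : IntegrableOn (fun r => ‖deriv U r‖ ^ 2) (Ioi (0:ℝ)) := by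
    have h1 : Integrable (fun r : ℝ => ‖deriv U r‖ ^ 2) := by
      apply Continuous.integrable_of_hasCompactSupport (by continuity)
      apply HasCompactSupport.intro hsupp.deriv
      intro x hx; simp [image_eq_zero_of_notMem_tsupport hx]
    exact h1.integrableOn
  -- integration by parts
  have key : ∫ r in Ioi (0:ℝ), ((r + ε)⁻¹ ^ 2 * φ r - (r + ε)⁻¹ * ψ r)
      = (0:ℝ) - (-(0 + ε)⁻¹ * φ 0) := by
    apply integral_Ioi_of_hasDerivAt_of_tendsto
      (f := fun r : ℝ => -(r + ε)⁻¹ * φ r)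
      (f' := fun r : ℝ => (r + ε)⁻¹ ^ 2 * φ r - (r + ε)⁻¹ * ψ r) (m := 0)
    · apply ContinuousAt.continuousWithinAt
      exact (((continuousAt_id.add continuousAt_const).inv₀
        (by show (0:ℝ) + ε ≠ 0; positivity)).neg.mul hφc.continuousAt)
    · intro x hx
      have hx0 : (0:ℝ) < x := hx
      have hne : x + ε ≠ 0 := by positivity
      have h1 : HasDerivAt (fun r : ℝ => (r + ε)⁻¹) (-(1:ℝ) / (x + ε) ^ 2) x := by
        simpa [Pi.inv_def] using ((hasDerivAt_id x).add_const ε).inv hne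
      have h2 := h1.neg.mul (hφd x)
      convert h2 using 1
      · rfl
      · rfl
      simp only [Pi.neg_apply]
      field_simp
      ring
    · exact intI.sub intJ
    · have hev : (fun r : ℝ => -(r + ε)⁻¹ * φ r) =ᶠ[atTop] (fun _ => (0:ℝ)) := by
        have h0 : φ =ᶠ[Filter.cocompact ℝ] 0 := by
          rw [hasCompactSupport_iff_eventuallyEq, Filter.coclosedCompact_eq_cocompact] at hφsupp
          exact hφsupp
        have h1 : φ =ᶠ[atTop] 0 := h0.filter_mono atTop_le_cocompact
        filter_upwards [h1] with r hr
        simp [hr]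
      exact Tendsto.congr' hev.symm tendsto_const_nhds
  rw [integral_sub intI intJ] at key
  -- pointwise bound and monotonicity
  have hmono : ∫ r in Ioi (0:ℝ), (r + ε)⁻¹ * ψ r
      ≤ ∫ r in Ioi (0:ℝ), ((1/2) * ((r + ε)⁻¹ ^ 2 * φ r) + 2 * ‖deriv U r‖ ^ 2) := by
    apply setIntegral_mono_on intJ ((intI.const_mul _).add (intD.const_mul _))
      measurableSet_Ioi
    intro r hr
    have hr0 : (0:ℝ) < r := hr
    have hrε : (0:ℝ) < (r + ε)⁻¹ := by positivity
    have hcs : (inner ℝ (U r) (deriv U r) : ℝ) ≤ ‖U r‖ * ‖deriv U r‖ :=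
      real_inner_le_norm _ _
    have h1 : (0:ℝ) ≤ ‖U r‖ := norm_nonneg _
    have h2 : (0:ℝ) ≤ ‖deriv U r‖ := norm_nonneg _
    simp only [hψdef, hφdef, Pi.add_apply]
    nlinarith [sq_nonneg ((r + ε)⁻¹ * ‖U r‖ - 2 * ‖deriv U r‖), mul_le_mul_of_nonneg_left hcs hrε.le]
  rw [integral_add (intI.const_mul _) (intD.const_mul _),
    integral_const_mul, integral_const_mul] at hmono
  have hφ0 : φ 0 = ‖U 0‖ ^ 2 := rfl
  have hεne : ε ≠ 0 := hε.ne'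
  have : (0:ℝ) - (-(0 + ε)⁻¹ * φ 0) = ε⁻¹ * ‖U 0‖ ^ 2 := by
    rw [hφ0]; field_simp; ring
  rw [this] at key
  have h2ε : 2 / ε * ‖U 0‖ ^ 2 = 2 * (ε⁻¹ * ‖U 0‖ ^ 2) := by
    rw [div_eq_mul_inv]; ring
  show (∫ r in Ioi (0:ℝ), (r + ε)⁻¹ ^ 2 * φ r)
      ≤ 2 / ε * ‖U 0‖ ^ 2 + 4 * ∫ r in Ioi (0:ℝ), ‖deriv U r‖ ^ 2
  linarith [key, hmono]
end

section
/- Let U : ℝ → ℂ be a continuously differentiable function with compact support such that U(0) = 0. Then ∫₀^∞ r⁻² |U(r)|² dr ≤ 4 ∫₀^∞ |U'(r)|² dr. -/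
open MeasureTheory RealInnerProductSpace Set

/-- Hardy inequality (ε = 0 case of (a1)): for `U : ℝ → ℂ` continuously
differentiable with compact support and `U 0 = 0`,
`∫₀^∞ r⁻² |U r|² dr ≤ 4 ∫₀^∞ |U' r|² dr`. -/
theorem hardy_inequality_zero (U : ℝ → ℂ)
    (hU : ContDiff ℝ 1 U) (hsupp : HasCompactSupport U) (h0 : U 0 = 0) :
    ∫ r in Set.Ioi (0 : ℝ), r⁻¹ ^ 2 * ‖U r‖ ^ 2
      ≤ 4 * ∫ r in Set.Ioi (0 : ℝ), ‖deriv U r‖ ^ 2 := by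
  have hUd : Differentiable ℝ U := hU.differentiable one_ne_zero
  have hU'c : Continuous (deriv U) := hU.continuous_deriv le_rfl
  -- a radius beyond which U and deriv U vanish
  obtain ⟨R₀, hR₀⟩ := hsupp.isCompact.isBounded.subset_closedBall 0
  set R : ℝ := max R₀ 1 with hRdef
  have hR1 : (0:ℝ) ≤ R := le_trans zero_le_one (le_max_right _ _)
  have hnmem : ∀ r : ℝ, R < r → r ∉ tsupport U := by
    intro r hr hmem
    have h1 := hR₀ hmem
    rw [Metric.mem_closedBall, Real.dist_eq, sub_zero] at h1
    have : r ≤ R₀ := (le_abs_self r).trans h1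
    have : R₀ ≤ R := le_max_left _ _
    linarith [(le_abs_self r).trans h1]
  have hUz : ∀ r : ℝ, R < r → U r = 0 := fun r hr =>
    image_eq_zero_of_notMem_tsupport (hnmem r hr)
  have hU'z : ∀ r : ℝ, R < r → deriv U r = 0 := by
    intro r hr
    by_contra h
    exact hnmem r hr (support_deriv_subset (Function.mem_support.mpr h))
  -- bound on deriv U
  obtain ⟨M, hM⟩ := hsupp.deriv.exists_bound_of_continuous hU'c
  have hM0 : (0:ℝ) ≤ M := le_trans (norm_nonneg _) (hM 0)
  -- mean value bound
  have hUb : ∀ r : ℝ, ‖U r‖ ≤ M * |r| := by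
    intro r
    have := Convex.norm_image_sub_le_of_norm_hasDerivWithin_le
      (f := U) (f' := deriv U) (s := univ)
      (fun x _ => (hUd x).hasDerivAt.hasDerivWithinAt)
      (fun x _ => hM x) convex_univ (mem_univ 0) (mem_univ r)
    simpa [h0, Real.norm_eq_abs] using this
  -- derivative of ‖U‖²
  have hφ : ∀ x : ℝ, HasDerivAt (fun r => ‖U r‖^2) (2 * ⟪U x, deriv U x⟫) x := by
    intro x
    have h := HasDerivAt.inner ℝ (hUd x).hasDerivAt (hUd x).hasDerivAt
    have he : (fun t : ℝ => (⟪U t, U t⟫ : ℝ)) = fun t => ‖U t‖^2 := by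
      funext t; exact real_inner_self_eq_norm_sq _
    rw [he] at h
    refine h.congr_deriv ?_
    rw [real_inner_comm (deriv U x) (U x)]
    ring
  set g : ℝ → ℝ := fun r => ‖U r‖^2 / (2*r) with hgdef
  set G : ℝ → ℝ := fun r => ⟪U r, deriv U r⟫ / r - ‖U r‖^2 / (2*r^2) with hGdef
  have hgderiv : ∀ x ∈ Ioi (0:ℝ), HasDerivAt g (G x) x := by
    intro x hx
    have hx0 : (0:ℝ) < x := hx
    have h2x : (2*x) ≠ 0 := by positivity
    have hd : HasDerivAt (fun r : ℝ => 2*r) 2 x := by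
      simpa using (hasDerivAt_id x).const_mul 2
    have h := (hφ x).div hd h2x
    refine h.congr_deriv ?_
    have hgen : ∀ I B : ℝ, I / x - B / (2*x^2) = (2*I*(2*x) - B*2)/(2*x)^2 := by
      intro I B
      have hxne : x ≠ 0 := ne_of_gt hx0
      field_simp
    exact (hgen _ _).symm
  have hg0 : g 0 = 0 := by simp [hgdef, h0]
  -- continuity at 0 from the right
  have hcont : ContinuousWithinAt g (Ici (0:ℝ)) 0 := by
    rw [ContinuousWithinAt, hg0]
    have h1 : ∀ᶠ t in nhdsWithin (0:ℝ) (Ici 0), 0 ≤ g t := by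
      filter_upwards [self_mem_nhdsWithin] with t ht
      have ht' : (0:ℝ) ≤ t := ht
      have hnum : (0:ℝ) ≤ ‖U t‖^2 := by positivity
      exact div_nonneg hnum (by linarith)
    have h2 : ∀ᶠ t in nhdsWithin (0:ℝ) (Ici 0), g t ≤ M^2 * t / 2 := by
      filter_upwards [self_mem_nhdsWithin] with t ht
      have ht' : (0:ℝ) ≤ t := ht
      rcases eq_or_lt_of_le ht' with h | h
      · simp [hgdef, ← h, h0]
      · have htne : t ≠ 0 := ne_of_gt h
        have hb : ‖U t‖ ≤ M * t := by simpa [abs_of_pos h] using hUb t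
        have hb2 : ‖U t‖^2 ≤ M^2 * t^2 := by nlinarith [norm_nonneg (U t)]
        have h3 : ‖U t‖^2 / (2*t) ≤ (M^2*t^2) / (2*t) := by gcongr
        have h4 : (M^2*t^2)/(2*t) = M^2 * t / 2 := by field_simp
        calc g t = ‖U t‖^2/(2*t) := rfl
          _ ≤ (M^2*t^2)/(2*t) := h3
          _ = M^2*t/2 := h4
    have h3 : Filter.Tendsto (fun t : ℝ => M^2 * t / 2)
        (nhdsWithin (0:ℝ) (Ici 0)) (nhds 0) := by
      have hc : Continuous (fun t : ℝ => M^2 * t / 2) := by continuity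
      have ht := hc.tendsto 0
      simp only [mul_zero, zero_div] at ht
      exact ht.mono_left nhdsWithin_le_nhds
    exact squeeze_zero' h1 h2 h3
  -- tendsto at top
  have htop : Filter.Tendsto g Filter.atTop (nhds 0) := by
    have hev : g =ᶠ[Filter.atTop] fun _ => (0:ℝ) := by
      filter_upwards [Filter.eventually_gt_atTop R] with r hr
      simp [hgdef, hUz r hr]
    exact Filter.Tendsto.congr' hev.symm tendsto_const_nhds
  -- generic integrability helper
  have intAux : ∀ (F : ℝ → ℝ) (B : ℝ), ContinuousOn F (Ioi (0:ℝ)) →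
      (∀ x, 0 < x → x ≤ R → |F x| ≤ B) → (∀ x, R < x → F x = 0) →
      IntegrableOn F (Ioi (0:ℝ)) := by
    intro F B hFc hFb hFz
    have h1 : IntegrableOn F (Ioc 0 R) := by
      apply Integrable.mono' (g := fun _ => B)
        (integrableOn_const measure_Ioc_lt_top.ne)
        ((hFc.mono Ioc_subset_Ioi_self).aestronglyMeasurable measurableSet_Ioc)
      refine (ae_restrict_iff' measurableSet_Ioc).mpr (ae_of_all _ ?_)
      intro x hx
      simpa [Real.norm_eq_abs] using hFb x hx.1 hx.2
    have h2 : IntegrableOn F (Ioi R) := by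
      exact (integrableOn_zero (ε' := ℝ)).congr_fun
        (fun x hx => (hFz x hx).symm) measurableSet_Ioi
    have := h1.union h2
    rwa [Ioc_union_Ioi_eq_Ioi hR1] at this
  -- integrability of the LHS integrand
  have hfc : ContinuousOn (fun r : ℝ => r⁻¹^2 * ‖U r‖^2) (Ioi (0:ℝ)) :=
    ((((continuousOn_id (s := Ioi (0:ℝ))).inv₀ (fun x hx => ne_of_gt hx)).pow 2)).mul
      ((hU.continuous.norm.pow 2).continuousOn)
  have hf : IntegrableOn (fun r : ℝ => r⁻¹ ^ 2 * ‖U r‖ ^ 2) (Ioi (0:ℝ)) := by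
    apply intAux _ (M^2) hfc
    · intro x hx hxR
      have hb : ‖U x‖ ≤ M * x := by simpa [abs_of_pos hx] using hUb x
      have hb2 : ‖U x‖^2 ≤ M^2 * x^2 := by nlinarith [norm_nonneg (U x)]
      have h1 : (0:ℝ) ≤ x⁻¹^2 * ‖U x‖^2 := by positivity
      rw [abs_of_nonneg h1]
      have hxne : x ≠ 0 := ne_of_gt hx
      have hstep : x⁻¹^2 * ‖U x‖^2 ≤ x⁻¹^2 * (M^2 * x^2) := by gcongr
      calc x⁻¹^2 * ‖U x‖^2 ≤ x⁻¹^2 * (M^2*x^2) := hstep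
        _ = M^2 := by field_simp
    · intro x hx; simp [hUz x hx]
  -- integrability of G
  have hGc : ContinuousOn G (Ioi (0:ℝ)) := by
    apply ContinuousOn.sub
    · exact ((hU.continuous.inner hU'c).continuousOn).div continuousOn_id
        (fun x hx => ne_of_gt hx)
    · exact ((hU.continuous.norm.pow 2).continuousOn).div
        (continuousOn_const.mul ((continuousOn_id (s := Ioi (0:ℝ))).pow 2))
        (fun x hx => by have : (0:ℝ) < x := hx; positivity)
  have hGint : IntegrableOn G (Ioi (0:ℝ)) := by
    apply intAux _ (M^2 + M^2/2) hGc
    · intro x hx hxR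
      have hb : ‖U x‖ ≤ M * x := by simpa [abs_of_pos hx] using hUb x
      have hI : |⟪U x, deriv U x⟫| ≤ M^2 * x := by
        calc |⟪U x, deriv U x⟫| ≤ ‖U x‖ * ‖deriv U x‖ := abs_real_inner_le_norm _ _
          _ ≤ (M*x) * M := mul_le_mul hb (hM x) (norm_nonneg _) (by positivity)
          _ = M^2 * x := by ring
      have hb2 : ‖U x‖^2 ≤ M^2 * x^2 := by nlinarith [norm_nonneg (U x)]
      have t1 : |⟪U x, deriv U x⟫ / x| ≤ M^2 := by
        rw [abs_div, abs_of_pos hx, div_le_iff₀ hx]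
        exact hI
      have t2 : |‖U x‖^2/(2*x^2)| ≤ M^2/2 := by
        rw [abs_div, abs_of_nonneg (by positivity : (0:ℝ) ≤ ‖U x‖^2),
          abs_of_pos (by positivity : (0:ℝ) < 2*x^2),
          div_le_div_iff₀ (by positivity) (by norm_num)]
        nlinarith
      calc |G x| = |⟪U x, deriv U x⟫ / x - ‖U x‖^2/(2*x^2)| := rfl
        _ ≤ |⟪U x, deriv U x⟫ / x| + |‖U x‖^2/(2*x^2)| := abs_sub _ _
        _ ≤ M^2 + M^2/2 := add_le_add t1 t2
    · intro x hx; simp [hGdef, hUz x hx, hU'z x hx]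
  -- integrability of the RHS integrand
  have hA : IntegrableOn (fun r : ℝ => ‖deriv U r‖^2) (Ioi (0:ℝ)) := by
    have hc : Continuous fun r : ℝ => ‖deriv U r‖^2 := (hU'c.norm).pow 2
    have hs : HasCompactSupport fun r : ℝ => ‖deriv U r‖^2 :=
      hsupp.deriv.comp_left (g := fun z : ℂ => ‖z‖^2) (by simp)
    exact (hc.integrable_of_hasCompactSupport hs).integrableOn
  -- fundamental theorem of calculus : ∫ G = 0
  have hint : ∫ x in Ioi (0:ℝ), G x = 0 := by
    have := integral_Ioi_of_hasDerivAt_of_tendsto hcont hgderiv hGint htop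
    simpa [hg0] using this
  -- pointwise inequality
  have hpt : ∀ x ∈ Ioi (0:ℝ), x⁻¹^2 * ‖U x‖^2 / 4 ≤ ‖deriv U x‖^2 - G x := by
    intro x hx
    have hx0 : (0:ℝ) < x := hx
    have hxne : x ≠ 0 := ne_of_gt hx0
    have key : (0:ℝ) ≤ ‖deriv U x - (2*x)⁻¹ • U x‖^2 := sq_nonneg _
    rw [norm_sub_sq_real, real_inner_smul_right, norm_smul, Real.norm_eq_abs,
      abs_of_pos (by positivity : (0:ℝ) < (2*x)⁻¹)] at key
    have e1 : 2*((2*x)⁻¹ * ⟪deriv U x, U x⟫) = ⟪U x, deriv U x⟫ / x := by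
      rw [real_inner_comm]
      field_simp
      try ring
    have e2 : ((2*x)⁻¹ * ‖U x‖)^2 = ‖U x‖^2/(4*x^2) := by
      have : ∀ c : ℝ, ((2*x)⁻¹ * c)^2 = c^2/(4*x^2) := by
        intro c; field_simp; try ring; try exact Or.inl trivial
      exact this _
    have e3 : x⁻¹^2 * ‖U x‖^2 / 4 = ‖U x‖^2/(4*x^2) := by
      have : ∀ c : ℝ, x⁻¹^2 * c / 4 = c/(4*x^2) := by
        intro c; field_simp; try ring; try exact Or.inl trivial
      exact this _
    have e4 : ‖U x‖^2/(2*x^2) = 2*(‖U x‖^2/(4*x^2)) := by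
      have : ∀ c : ℝ, c/(2*x^2) = 2*(c/(4*x^2)) := by
        intro c; field_simp; try ring; try exact Or.inl trivial
      exact this _
    rw [e1, e2] at key
    rw [e3]
    show _ ≤ ‖deriv U x‖^2 - (⟪U x, deriv U x⟫/x - ‖U x‖^2/(2*x^2))
    rw [e4]
    linarith
  -- putting it together
  have hf4 : IntegrableOn (fun r : ℝ => r⁻¹^2 * ‖U r‖^2 / 4) (Ioi (0:ℝ)) := hf.div_const 4
  have hsub : IntegrableOn (fun x : ℝ => ‖deriv U x‖^2 - G x) (Ioi (0:ℝ)) := hA.sub hGint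
  have hmono := setIntegral_mono_on hf4 hsub measurableSet_Ioi hpt
  rw [integral_sub hA hGint, hint, sub_zero, integral_div] at hmono
  linarith
end

section
/- Let F : ℝ → ℂ be twice continuously differentiable on [0, ∞) with F''(t) = −i·λ·b·F(t) for all t ≥ 0, such that F(t) → 0 as t → +∞ and F'(0) = 1. Then F(t) = E(t) for all t ≥ 0. -/
open Complex Filter

lemma aux_const_of_hasDerivWithinAt_zero {g : ℝ → ℂ}
    (h : ∀ t ∈ Set.Ici (0:ℝ), HasDerivWithinAt g 0 (Set.Ici 0) t) :
    ∀ t ∈ Set.Ici (0:ℝ), g t = g 0 := by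
  intro t ht
  refine (convex_Ici 0).is_const_of_fderivWithin_eq_zero
    (fun x hx => (h x hx).differentiableWithinAt) (fun x hx => ?_) ht Set.self_mem_Ici
  rw [(h x hx).hasFDerivWithinAt.fderivWithin (uniqueDiffOn_Ici 0 x hx)]
  ext; simp

lemma aux_hasDerivAt_cexp (β : ℂ) (t : ℝ) :
    HasDerivAt (fun u : ℝ => Complex.exp (β * u)) (β * Complex.exp (β * t)) t := by
  have h1 : HasDerivAt (fun u : ℝ => β * (u:ℂ)) β t := by
    simpa using (Complex.ofRealCLM.hasDerivAt (x := t)).const_mul β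
  simpa [mul_comm] using h1.cexp

/-- Uniqueness of the decaying solution of the boundary-layer equation (39) with unit
normal derivative at `t = 0`: if `F` is twice continuously differentiable on `[0,∞)`,
`F'' = −iλb F` on `[0,∞)`, `F(t) → 0` as `t → +∞`, and `F'(0) = 1`, then `F` coincides
on `[0,∞)` with the explicit profile (38). -/
theorem boundary_layer_profile_unique (lam b : ℝ) (hlam : 0 < lam) (hb : 0 < b)
    (E : ℝ → ℂ)
    (hE : E = fun t : ℝ =>
      -((1 + Complex.I) / (Real.sqrt (2 * lam * b) : ℂ)) *
        Complex.exp (((-1 + Complex.I) / (Real.sqrt 2 : ℂ)) *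
          (Real.sqrt (lam * b) : ℂ) * (t : ℂ)))
    (F : ℝ → ℂ) (hF : ContDiffOn ℝ 2 F (Set.Ici 0))
    (hode : ∀ t : ℝ, 0 ≤ t →
      derivWithin (derivWithin F (Set.Ici 0)) (Set.Ici 0) t
        = -(Complex.I * (lam : ℂ) * (b : ℂ)) * F t)
    (hdecay : Tendsto F atTop (nhds 0))
    (hder0 : derivWithin F (Set.Ici 0) 0 = 1) :
    ∀ t : ℝ, 0 ≤ t → F t = E t := by
  intro t0 ht0
  have hs : UniqueDiffOn ℝ (Set.Ici (0:ℝ)) := uniqueDiffOn_Ici 0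
  set α : ℂ := ((-1 + Complex.I) / (Real.sqrt 2 : ℂ)) * (Real.sqrt (lam * b) : ℂ) with hα
  have hlb : (0:ℝ) < lam * b := mul_pos hlam hb
  have hsqR : (0:ℝ) < Real.sqrt (lam * b) := Real.sqrt_pos.mpr hlb
  have hsqne : ((Real.sqrt (lam * b) : ℝ) : ℂ) ≠ 0 := by
    exact_mod_cast ne_of_gt hsqR
  have h2ne : ((Real.sqrt 2 : ℝ) : ℂ) ≠ 0 := by
    have : (0:ℝ) < Real.sqrt 2 := Real.sqrt_pos.mpr (by norm_num)
    exact_mod_cast ne_of_gt this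
  have hsqC : ((Real.sqrt (lam * b) : ℝ) : ℂ) ^ 2 = (lam : ℂ) * b := by
    rw [← Complex.ofReal_pow, Real.sq_sqrt hlb.le]; push_cast; ring
  have h2C : ((Real.sqrt 2 : ℝ) : ℂ) ^ 2 = 2 := by
    rw [← Complex.ofReal_pow, Real.sq_sqrt (by norm_num : (0:ℝ) ≤ 2)]; norm_num
  have hI2 : Complex.I ^ 2 = -1 := Complex.I_sq
  have hα2 : α ^ 2 = -(Complex.I * (lam : ℂ) * (b : ℂ)) := by
    have h : α ^ 2 = ((-1 + Complex.I) ^ 2 * ((Real.sqrt (lam * b) : ℝ) : ℂ) ^ 2)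
        / ((Real.sqrt 2 : ℝ) : ℂ) ^ 2 := by rw [hα]; ring
    rw [h, hsqC, h2C]
    linear_combination ((lam:ℂ) * b / 2) * hI2
  have hαne : α ≠ 0 := by
    rw [hα]
    apply mul_ne_zero _ hsqne
    apply div_ne_zero _ h2ne
    intro h
    have := congrArg Complex.im h
    simp at this
  have hαre : α.re < 0 := by
    have hval : α = Complex.ofReal (Real.sqrt (lam * b) / Real.sqrt 2) * (-1 + Complex.I) := by
      rw [hα]; push_cast; ring
    have : α.re = (Real.sqrt (lam * b) / Real.sqrt 2) * (-1) := by
      rw [hval]; simp [Complex.mul_re]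
    rw [this]
    have h0 : 0 < Real.sqrt (lam * b) / Real.sqrt 2 :=
      div_pos hsqR (Real.sqrt_pos.mpr (by norm_num))
    nlinarith
  -- derivatives
  have hFdiff : DifferentiableOn ℝ F (Set.Ici 0) := hF.differentiableOn (by norm_num)
  have hF'cd : ContDiffOn ℝ 1 (derivWithin F (Set.Ici 0)) (Set.Ici 0) :=
    hF.derivWithin hs (by norm_num)
  have hF'diff : DifferentiableOn ℝ (derivWithin F (Set.Ici 0)) (Set.Ici 0) :=
    hF'cd.differentiableOn one_ne_zero
  have hFd : ∀ t ∈ Set.Ici (0:ℝ), HasDerivWithinAt F (derivWithin F (Set.Ici 0) t) (Set.Ici 0) t :=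
    fun t ht => (hFdiff t ht).hasDerivWithinAt
  have hF2d : ∀ t ∈ Set.Ici (0:ℝ),
      HasDerivWithinAt (derivWithin F (Set.Ici 0)) (α ^ 2 * F t) (Set.Ici 0) t := by
    intro t ht
    have h := (hF'diff t ht).hasDerivWithinAt
    rwa [hode t ht, ← hα2] at h
  set c : ℂ := 1 - α * F 0 with hc
  -- Step 1: F' - αF = c e^{-αt}
  have hG : ∀ t ∈ Set.Ici (0:ℝ),
      HasDerivWithinAt (fun u : ℝ => Complex.exp (α * u) * (derivWithin F (Set.Ici 0) u - α * F u))
        0 (Set.Ici 0) t := by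
    intro t ht
    have h1 := (aux_hasDerivAt_cexp α t).hasDerivWithinAt (s := Set.Ici 0)
    have h2 : HasDerivWithinAt (fun u => derivWithin F (Set.Ici 0) u - α * F u)
        (α ^ 2 * F t - α * derivWithin F (Set.Ici 0) t) (Set.Ici 0) t :=
      (hF2d t ht).sub ((hFd t ht).const_mul α)
    have h3 := h1.fun_mul h2
    refine h3.congr_deriv ?_
    symm
    ring
  have hGconst := aux_const_of_hasDerivWithinAt_zero hG
  have hkey : ∀ t ∈ Set.Ici (0:ℝ),
      derivWithin F (Set.Ici 0) t - α * F t = c * Complex.exp (-α * t) := by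
    intro t ht
    have h := hGconst t ht
    simp only [Complex.ofReal_zero, mul_zero, Complex.exp_zero, one_mul, hder0] at h
    have hne : Complex.exp (α * t) ≠ 0 := Complex.exp_ne_zero _
    have hinv : Complex.exp (-α * t) = (Complex.exp (α * t))⁻¹ := by
      rw [neg_mul, Complex.exp_neg]
    rw [hinv, hc]
    field_simp
    linear_combination h
  -- Step 2: F t = (F 0 + d) e^{αt} - d e^{-αt}
  set d : ℂ := c / (2 * α) with hd_def
  have hd : 2 * α * d = c := by
    rw [hd_def]; field_simp
  have hK : ∀ t ∈ Set.Ici (0:ℝ),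
      HasDerivWithinAt (fun u : ℝ => Complex.exp (-α * u) * F u
        + d * Complex.exp ((-(2 * α)) * u)) 0 (Set.Ici 0) t := by
    intro t ht
    have h1 := ((aux_hasDerivAt_cexp (-α) t).hasDerivWithinAt (s := Set.Ici 0)).fun_mul (hFd t ht)
    have h2 := ((aux_hasDerivAt_cexp (-(2*α)) t).hasDerivWithinAt (s := Set.Ici 0)).const_mul d
    have h3 := h1.fun_add h2
    refine h3.congr_deriv ?_
    symm
    have hF't : derivWithin F (Set.Ici 0) t = α * F t + c * Complex.exp (-α * t) := by
      linear_combination hkey t ht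
    have hee : Complex.exp (-α * t) * Complex.exp (-α * t) = Complex.exp ((-(2 * α)) * t) := by
      rw [← Complex.exp_add]; ring_nf
    rw [hF't]
    linear_combination (-c) * hee + Complex.exp ((-(2 * α)) * (t:ℂ)) * hd
  have hKconst := aux_const_of_hasDerivWithinAt_zero hK
  have hFform : ∀ t ∈ Set.Ici (0:ℝ),
      F t = (F 0 + d) * Complex.exp (α * t) - d * Complex.exp (-α * t) := by
    intro t ht
    have h := hKconst t ht
    simp only [Complex.ofReal_zero, mul_zero, Complex.exp_zero, one_mul, mul_one] at h
    have h1 : Complex.exp (α * t) * Complex.exp (-α * t) = 1 := by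
      rw [← Complex.exp_add]; ring_nf; exact Complex.exp_zero
    have h2 : Complex.exp (α * t) * Complex.exp ((-(2 * α)) * t) = Complex.exp (-α * t) := by
      rw [← Complex.exp_add]; ring_nf
    have hmul := congrArg (fun z => Complex.exp (α * t) * z) h
    calc F t = Complex.exp (α * t) * Complex.exp (-α * t) * F t := by rw [h1]; ring
    _ = (F 0 + d) * Complex.exp (α * t) - d * Complex.exp (-α * t) := by
        linear_combination hmul - d * h2
  -- Step 3: decay forces c = 0
  have hexp0 : Tendsto (fun t : ℝ => Complex.exp (α * t)) atTop (nhds 0) := by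
    rw [tendsto_zero_iff_norm_tendsto_zero]
    have hnorm : ∀ t : ℝ, ‖Complex.exp (α * t)‖ = Real.exp (α.re * t) := by
      intro t
      rw [Complex.norm_exp]
      congr 1
      simp [Complex.mul_re]
    simp only [hnorm]
    rw [Real.tendsto_exp_comp_nhds_zero]
    exact Tendsto.const_mul_atTop_of_neg hαre tendsto_id
  have hdzero : d = 0 := by
    have h1 : Tendsto (fun t : ℝ =>
        ((F 0 + d) * Complex.exp (α * t) - F t) * Complex.exp (α * t))
        atTop (nhds 0) := by
      have h := ((hexp0.const_mul (F 0 + d)).sub hdecay).mul hexp0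
      simpa using h
    have h2 : (fun t : ℝ =>
        ((F 0 + d) * Complex.exp (α * t) - F t) * Complex.exp (α * t))
        =ᶠ[atTop] fun _ => d := by
      filter_upwards [eventually_ge_atTop (0:ℝ)] with t ht
      rw [hFform t ht]
      have h3 : Complex.exp (-α * t) * Complex.exp (α * t) = 1 := by
        rw [← Complex.exp_add]; ring_nf; exact Complex.exp_zero
      linear_combination d * h3
    exact (tendsto_nhds_unique (h1.congr' h2) tendsto_const_nhds).symm
  have hc0 : c = 0 := by
    rw [← hd, hdzero]; ring
  -- conclude
  have hF0 : α * F 0 = 1 := by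
    rw [hc] at hc0
    linear_combination -hc0
  have hsplit : (Real.sqrt (2 * lam * b) : ℝ) = Real.sqrt 2 * Real.sqrt (lam * b) := by
    rw [mul_assoc, Real.sqrt_mul (by norm_num : (0:ℝ) ≤ 2)]
  have hkeyF0 : α * (-((1 + Complex.I) / ((Real.sqrt (2 * lam * b) : ℝ) : ℂ))) = 1 := by
    rw [hα, hsplit, Complex.ofReal_mul, div_mul_eq_mul_div, mul_neg, div_mul_div_comm,
      ← neg_div, div_eq_one_iff_eq (mul_ne_zero h2ne (mul_ne_zero h2ne hsqne))]
    linear_combination (-((Real.sqrt (lam*b):ℝ):ℂ)) * hI2 + (-((Real.sqrt (lam*b):ℝ):ℂ)) * h2C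
  have hF0val : F 0 = -((1 + Complex.I) / ((Real.sqrt (2 * lam * b) : ℝ) : ℂ)) :=
    mul_left_cancel₀ hαne (hF0.trans hkeyF0.symm)
  have hform := hFform t0 ht0
  rw [hdzero] at hform
  simp only [zero_mul, sub_zero, add_zero] at hform
  rw [hE]
  simp only
  rw [hform, hF0val]
end
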